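/- Let (𝒳, ℓ_X) and (𝒴, ℓ_Y) be ℝ^d-LMMCs and let k ≥ 0 be an integer. (1) If d_WL^(k)((𝒳,ℓ_X),(𝒴,ℓ_Y)) = 0, then h((𝒳,ℓ_X)) = h((𝒴,ℓ_Y)) for every k-layer Markov chain neural network h ∈ 𝒩𝒩_k(ℝ^d). (2) If d_WL^(k)((𝒳,ℓ_X),(𝒴,ℓ_Y)) > 0, then there exists h ∈ 𝒩𝒩_k(ℝ^d) with h((𝒳,ℓ_X)) ≠ h((𝒴,ℓ_Y)). -/

import Mathlib

open scoped BigOperators NNReal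

namespace WLGW

variable {X Y W : Type*}

/-- A probability mass function on a finite type. -/
def IsPMF [Fintype X] (p : X → ℝ) : Prop :=
  (∀ x, 0 ≤ p x) ∧ ∑ x, p x = 1

/-- `γ` is a coupling of `p` and `q`. -/
def IsCoupling [Fintype X] [Fintype Y] (p : X → ℝ) (q : Y → ℝ) (γ : X → Y → ℝ) : Prop :=
  (∀ x y, 0 ≤ γ x y) ∧ (∀ x, ∑ y, γ x y = p x) ∧ (∀ y, ∑ x, γ x y = q y)

/-- `(m, μ)` is a measure Markov chain: each `m x` is a pmf, and `μ` is a fully supported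
stationary pmf. -/
def IsMMC [Fintype X] (m : X → X → ℝ) (μ : X → ℝ) : Prop :=
  (∀ x, IsPMF (m x)) ∧ IsPMF μ ∧ (∀ x, 0 < μ x) ∧ (∀ x', ∑ x, m x x' * μ x = μ x')

/-- `dX` is a metric on the finite type `X`. -/
def IsMetricOn [Fintype X] (dX : X → X → ℝ) : Prop :=
  (∀ x, dX x x = 0) ∧ (∀ x y, dX x y = dX y x) ∧ (∀ x y, x ≠ y → 0 < dX x y) ∧
    (∀ x y z, dX x z ≤ dX x y + dX y z)

/-- The iterated Weisfeiler–Lehman cost `D_k`. -/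
noncomputable def costIter [Fintype X] [Fintype Y] (mX : X → X → ℝ) (mY : Y → Y → ℝ)
    (D0 : X → Y → ℝ) : ℕ → X → Y → ℝ
  | 0 => D0
  | k + 1 => fun x y => sInf {r : ℝ | ∃ γ : X → Y → ℝ, IsCoupling (mX x) (mY y) γ ∧
      r = ∑ x', ∑ y', costIter mX mY D0 k x' y' * γ x' y'}

/-- The Weisfeiler–Lehman distance of depth `k` between two labeled measure Markov chains. -/
noncomputable def dWL {Z : Type*} [PseudoMetricSpace Z] [Fintype X] [Fintype Y]
    (mX : X → X → ℝ) (μX : X → ℝ) (ℓX : X → Z)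
    (mY : Y → Y → ℝ) (μY : Y → ℝ) (ℓY : Y → Z) (k : ℕ) : ℝ :=
  sInf {r : ℝ | ∃ γ : X → Y → ℝ, IsCoupling μX μY γ ∧
      r = ∑ x, ∑ y, costIter mX mY (fun x y => dist (ℓX x) (ℓY y)) k x y * γ x y}

/-- The absolute Weisfeiler–Lehman distance. -/
noncomputable def dWLsup {Z : Type*} [PseudoMetricSpace Z] [Fintype X] [Fintype Y]
    (mX : X → X → ℝ) (μX : X → ℝ) (ℓX : X → Z)
    (mY : Y → Y → ℝ) (μY : Y → ℝ) (ℓY : Y → Z) : ℝ :=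
  ⨆ k : ℕ, dWL mX μX ℓX mY μY ℓY k

/-- Isomorphism of labeled measure Markov chains. -/
def LMMCIso {Z : Type*} [Fintype X] [Fintype Y]
    (mX : X → X → ℝ) (μX : X → ℝ) (ℓX : X → Z)
    (mY : Y → Y → ℝ) (μY : Y → ℝ) (ℓY : Y → Z) : Prop :=
  ∃ ψ : X ≃ Y, (∀ x, ℓY (ψ x) = ℓX x) ∧ (∀ x x', mY (ψ x) (ψ x') = mX x x') ∧
    (∀ x, μY (ψ x) = μX x)

/-- The `q`-Markov kernel of a finite simple graph. -/
noncomputable def graphKernel {V : Type*} [Fintype V] [DecidableEq V] (G : SimpleGraph V) [DecidableRel G.Adj]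
    (q : ℝ) (v v' : V) : ℝ :=
  if G.degree v = 0 then (if v' = v then 1 else 0)
  else (if v' = v then q else 0) + (if G.Adj v v' then (1 - q) / (G.degree v : ℝ) else 0)

/-- The stationary degree measure of a finite simple graph. -/
noncomputable def graphMu {V : Type*} [Fintype V] (G : SimpleGraph V) [DecidableRel G.Adj]
    (v : V) : ℝ :=
  ((max (G.degree v) 1 : ℕ) : ℝ) / ∑ v', ((max (G.degree v') 1 : ℕ) : ℝ)

/-- The type of depth-`k` Weisfeiler–Lehman labels over an initial label set `Z`. -/
def WLType (Z : Type*) : ℕ → Type _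
  | 0 => Z
  | k + 1 => WLType Z k × Multiset (WLType Z k)

/-- The Weisfeiler–Lehman label hierarchy `ℓ^k` of a labeled graph. -/
def wlLabel {V Z : Type*} [Fintype V] (G : SimpleGraph V) [DecidableRel G.Adj] (ℓ : V → Z) :
    (k : ℕ) → V → WLType Z k
  | 0 => ℓ
  | k + 1 => fun v => (wlLabel G ℓ k v, (G.neighborFinset v).val.map (wlLabel G ℓ k))

/-- The multiset `L_k((G, ℓ))` of depth-`k` WL labels of all vertices. -/
def wlMultiset {V Z : Type*} [Fintype V] (G : SimpleGraph V) [DecidableRel G.Adj]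
    (ℓ : V → Z) (k : ℕ) : Multiset (WLType Z k) :=
  Finset.univ.val.map (wlLabel G ℓ k)

/-- The WL test distinguishes two labeled graphs. -/
def WLDistinguishes {V₁ V₂ Z : Type*} [Fintype V₁] [Fintype V₂]
    (G₁ : SimpleGraph V₁) [DecidableRel G₁.Adj] (ℓ₁ : V₁ → Z)
    (G₂ : SimpleGraph V₂) [DecidableRel G₂.Adj] (ℓ₂ : V₂ → Z) : Prop :=
  ∃ k, wlMultiset G₁ ℓ₁ k ≠ wlMultiset G₂ ℓ₂ k

/-- The relabeling `ℓ^g(v) = g(ℓ(v), deg v, |V|)`. -/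
def relabel {V Z Z₁ : Type*} [Fintype V] (G : SimpleGraph V) [DecidableRel G.Adj]
    (ℓ : V → Z) (g : Z × ℕ × ℕ → Z₁) : V → Z₁ :=
  fun v => g (ℓ v, G.degree v, Fintype.card V)

/-- `kpow m k = m^{⊗k}`, the `k`-step Markov kernel (`kpow m 0` is the identity kernel). -/
def kpow [Fintype X] [DecidableEq X] (m : X → X → ℝ) : ℕ → X → X → ℝ
  | 0 => fun x x' => if x' = x then 1 else 0
  | k + 1 => fun x x'' => ∑ x', kpow m k x' x'' * m x x'

/-- The Wasserstein distance between the pushforwards `(ℓX)_# p` and `(ℓY)_# q`, expressed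
through couplings of `p` and `q`. -/
noncomputable def wassersteinCost {Z : Type*} [PseudoMetricSpace Z] [Fintype X] [Fintype Y]
    (ℓX : X → Z) (ℓY : Y → Z) (p : X → ℝ) (q : Y → ℝ) : ℝ :=
  sInf {r : ℝ | ∃ γ : X → Y → ℝ, IsCoupling p q γ ∧
      r = ∑ x, ∑ y, dist (ℓX x) (ℓY y) * γ x y}

/-- The lower bound `d_WLLB^(k)` for the WL distance. -/
noncomputable def dWLLB {Z : Type*} [PseudoMetricSpace Z] [Fintype X] [Fintype Y]
    [DecidableEq X] [DecidableEq Y]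
    (mX : X → X → ℝ) (μX : X → ℝ) (ℓX : X → Z)
    (mY : Y → Y → ℝ) (μY : Y → ℝ) (ℓY : Y → Z) (k : ℕ) : ℝ :=
  sInf {r : ℝ | ∃ γ : X → Y → ℝ, IsCoupling μX μY γ ∧
      r = ∑ x, ∑ y, wassersteinCost ℓX ℓY (kpow mX k x) (kpow mY k y) * γ x y}

/-- Dimension sequence of an MCNN: `mcnnDim d dims 0 = d`, then `dims`. -/
def mcnnDim (d : ℕ) (dims : ℕ → ℕ) : ℕ → ℕ
  | 0 => d
  | i + 1 => dims i

/-- A `k`-layer Markov chain neural network on `ℝ^d`-LMMCs: Lipschitz maps `φ_1, …, φ_{k+1}`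
followed by a continuous map `ψ`. -/
structure MCNN (d k : ℕ) where
  dims : ℕ → ℕ
  φ : (i : ℕ) → EuclideanSpace ℝ (Fin (mcnnDim d dims i)) →
      EuclideanSpace ℝ (Fin (mcnnDim d dims (i + 1)))
  φ_lip : ∀ i, ∃ K : ℝ≥0, LipschitzWith K (φ i)
  ψ : EuclideanSpace ℝ (Fin (mcnnDim d dims (k + 1))) → ℝ
  ψ_cont : Continuous ψ

/-- Labels after `j` layers of an MCNN (the map `F_{φ_j} ∘ ⋯ ∘ F_{φ_1}`). -/
noncomputable def mcnnLabel {X : Type*} [Fintype X] {d k : ℕ} (N : MCNN d k)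
    (m : X → X → ℝ) (ℓ : X → EuclideanSpace ℝ (Fin d)) :
    (j : ℕ) → X → EuclideanSpace ℝ (Fin (mcnnDim d N.dims j))
  | 0 => ℓ
  | j + 1 => fun x => ∑ x', m x x' • N.φ j (mcnnLabel N m ℓ j x')

/-- Evaluation of an MCNN on an `ℝ^d`-LMMC: `ψ ∘ S_{φ_{k+1}} ∘ F_{φ_k} ∘ ⋯ ∘ F_{φ_1}`. -/
noncomputable def mcnnEval {X : Type*} [Fintype X] {d k : ℕ} (N : MCNN d k)
    (m : X → X → ℝ) (μ : X → ℝ) (ℓ : X → EuclideanSpace ℝ (Fin d)) : ℝ :=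
  N.ψ (∑ x, μ x • N.φ k (mcnnLabel N m ℓ k x))

/-- `k`-step couplings between the Markov kernels `mX` and `mY` (defined for `k ≥ 1`). -/
def IsStepCoupling [Fintype X] [Fintype Y] (mX : X → X → ℝ) (mY : Y → Y → ℝ) :
    ℕ → (X → Y → X → Y → ℝ) → Prop
  | 0, _ => False
  | 1, ν => ∀ x y, IsCoupling (mX x) (mY y) (ν x y)
  | k + 2, ν => ∃ νk ν1 : X → Y → X → Y → ℝ,
      IsStepCoupling mX mY (k + 1) νk ∧ (∀ x y, IsCoupling (mX x) (mY y) (ν1 x y)) ∧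
      ν = fun x y x' y' => ∑ x'', ∑ y'', νk x'' y'' x' y' * ν1 x y x'' y''

/-- The `k`-distortion `dis^(k)(γ, ν)`. -/
def disk [Fintype X] [Fintype Y] (dX : X → X → ℝ) (dY : Y → Y → ℝ)
    (γ : X → Y → ℝ) (ν : X → Y → X → Y → ℝ) : ℝ :=
  ∑ x, ∑ y, ∑ x'', ∑ y'', ∑ x', ∑ y',
    |dX x x' - dY y y'| * ν x'' y'' x' y' * γ x'' y'' * γ x y

/-- The `k`-Gromov–Wasserstein distance between Markov chain metric spaces. -/
noncomputable def dGWk [Fintype X] [Fintype Y]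
    (mX : X → X → ℝ) (dX : X → X → ℝ) (μX : X → ℝ)
    (mY : Y → Y → ℝ) (dY : Y → Y → ℝ) (μY : Y → ℝ) (k : ℕ) : ℝ :=
  sInf {r : ℝ | ∃ (γ : X → Y → ℝ) (ν : X → Y → X → Y → ℝ),
      IsCoupling μX μY γ ∧ IsStepCoupling mX mY k ν ∧ r = disk dX dY γ ν}

/-- The absolute Gromov–Wasserstein distance between MCMSs: `sup_{k ≥ 1} d_GW^(k)`. -/
noncomputable def dGWMCMS [Fintype X] [Fintype Y]
    (mX : X → X → ℝ) (dX : X → X → ℝ) (μX : X → ℝ)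
    (mY : Y → Y → ℝ) (dY : Y → Y → ℝ) (μY : Y → ℝ) : ℝ :=
  ⨆ k : ℕ, dGWk mX dX μX mY dY μY (k + 1)

/-- Isomorphism of Markov chain metric spaces. -/
def MCMSIso [Fintype X] [Fintype Y]
    (mX : X → X → ℝ) (dX : X → X → ℝ) (μX : X → ℝ)
    (mY : Y → Y → ℝ) (dY : Y → Y → ℝ) (μY : Y → ℝ) : Prop :=
  ∃ ψ : X ≃ Y, (∀ x x', dY (ψ x) (ψ x') = dX x x') ∧
    (∀ x x', mY (ψ x) (ψ x') = mX x x') ∧ (∀ x, μY (ψ x) = μX x)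

/-- The decoupled Gromov–Wasserstein distance between finite metric measure spaces. -/
noncomputable def dGWbi [Fintype X] [Fintype Y]
    (dX : X → X → ℝ) (μX : X → ℝ) (dY : Y → Y → ℝ) (μY : Y → ℝ) : ℝ :=
  sInf {r : ℝ | ∃ γ γ' : X → Y → ℝ, IsCoupling μX μY γ ∧ IsCoupling μX μY γ' ∧
      r = ∑ x, ∑ y, ∑ x', ∑ y', |dX x x' - dY y y'| * γ' x' y' * γ x y}

/-- `k`-step couplings between the measures `μX` and `μY`
(`k = 0` gives ordinary couplings). -/
def IsMeasureStepCoupling [Fintype X] [Fintype Y] (mX : X → X → ℝ) (mY : Y → Y → ℝ)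
    (μX : X → ℝ) (μY : Y → ℝ) : ℕ → (X → Y → ℝ) → Prop
  | 0, γ => IsCoupling μX μY γ
  | k + 1, γk => ∃ (γ : X → Y → ℝ) (ν : X → Y → X → Y → ℝ),
      IsCoupling μX μY γ ∧ IsStepCoupling mX mY (k + 1) ν ∧
      γk = fun x' y' => ∑ x, ∑ y, ν x y x' y' * γ x y

/-- The WWL label iteration. -/
noncomputable def wwlLabel {V : Type*} [Fintype V] {d : ℕ} (G : SimpleGraph V)
    [DecidableRel G.Adj] (ℓ : V → EuclideanSpace ℝ (Fin d)) :
    ℕ → V → EuclideanSpace ℝ (Fin d)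
  | 0 => ℓ
  | i + 1 => fun v => (1 / 2 : ℝ) •
      (wwlLabel G ℓ i v + ((G.degree v : ℝ))⁻¹ • ∑ v' ∈ G.neighborFinset v, wwlLabel G ℓ i v')

/-- The stacked WWL label `L^k_G = (ℓ^0, …, ℓ^k)`, valued in Euclidean `ℝ^{d(k+1)}`. -/
noncomputable def stackedLabel {V : Type*} [Fintype V] {d : ℕ} (G : SimpleGraph V)
    [DecidableRel G.Adj] (ℓ : V → EuclideanSpace ℝ (Fin d)) (k : ℕ) (v : V) :
    EuclideanSpace ℝ (Fin (k + 1) × Fin d) :=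
  WithLp.toLp 2 (fun p : Fin (k + 1) × Fin d => wwlLabel G ℓ (p.1 : ℕ) v p.2)

/-! ### Auxiliary machinery -/

open scoped Classical

section CouplingAux

variable [Fintype X] [Fintype Y]

lemma prod_coupling {p : X → ℝ} {q : Y → ℝ} (hp : IsPMF p) (hq : IsPMF q) :
    IsCoupling p q (fun x y => p x * q y) := by
  refine ⟨fun x y => mul_nonneg (hp.1 x) (hq.1 y), fun x => ?_, fun y => ?_⟩
  · rw [← Finset.mul_sum, hq.2, mul_one]
  · rw [← Finset.sum_mul, hp.2, one_mul]

lemma coupling_sum_nonneg {f : X → Y → ℝ} (hf : ∀ x y, 0 ≤ f x y) {p : X → ℝ} {q : Y → ℝ}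
    {γ : X → Y → ℝ} (hγ : IsCoupling p q γ) :
    0 ≤ ∑ x, ∑ y, f x y * γ x y :=
  Finset.sum_nonneg fun x _ => Finset.sum_nonneg fun y _ => mul_nonneg (hf x y) (hγ.1 x y)

/-- The generic coupling-cost set. -/
def costSet (p : X → ℝ) (q : Y → ℝ) (f : X → Y → ℝ) : Set ℝ :=
  {r : ℝ | ∃ γ : X → Y → ℝ, IsCoupling p q γ ∧ r = ∑ x, ∑ y, f x y * γ x y}

lemma costSet_nonempty {p : X → ℝ} {q : Y → ℝ} (hp : IsPMF p) (hq : IsPMF q) (f : X → Y → ℝ) :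
    (costSet p q f).Nonempty :=
  ⟨_, fun x y => p x * q y, prod_coupling hp hq, rfl⟩

lemma costSet_bddBelow {p : X → ℝ} {q : Y → ℝ} {f : X → Y → ℝ} (hf : ∀ x y, 0 ≤ f x y) :
    BddBelow (costSet p q f) := by
  refine ⟨0, fun r hr => ?_⟩
  obtain ⟨γ, hγ, rfl⟩ := hr
  exact coupling_sum_nonneg hf hγ

lemma sInf_costSet_nonneg {p : X → ℝ} {q : Y → ℝ} (hp : IsPMF p) (hq : IsPMF q)
    {f : X → Y → ℝ} (hf : ∀ x y, 0 ≤ f x y) : 0 ≤ sInf (costSet p q f) := by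
  apply le_csInf (costSet_nonempty hp hq f)
  rintro r ⟨γ, hγ, rfl⟩
  exact coupling_sum_nonneg hf hγ

lemma sInf_costSet_le {p : X → ℝ} {q : Y → ℝ} {f : X → Y → ℝ} (hf : ∀ x y, 0 ≤ f x y)
    {γ : X → Y → ℝ} (hγ : IsCoupling p q γ) :
    sInf (costSet p q f) ≤ ∑ x, ∑ y, f x y * γ x y :=
  csInf_le (costSet_bddBelow hf) ⟨γ, hγ, rfl⟩

lemma exists_coupling_lt {p : X → ℝ} {q : Y → ℝ} (hp : IsPMF p) (hq : IsPMF q)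
    (f : X → Y → ℝ) {ε : ℝ} (hε : 0 < ε) :
    ∃ γ : X → Y → ℝ, IsCoupling p q γ ∧
      ∑ x, ∑ y, f x y * γ x y < sInf (costSet p q f) + ε := by
  obtain ⟨r, ⟨γ, hγ, rfl⟩, hr⟩ := Real.lt_sInf_add_pos (costSet_nonempty hp hq f) hε
  exact ⟨γ, hγ, hr⟩

variable {mX : X → X → ℝ} {mY : Y → Y → ℝ} {D0 : X → Y → ℝ}

lemma costIter_succ_eq (k : ℕ) (x : X) (y : Y) :
    costIter mX mY D0 (k + 1) x y = sInf (costSet (mX x) (mY y) (costIter mX mY D0 k)) := rfl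

lemma costIter_nonneg (hmX : ∀ x, IsPMF (mX x)) (hmY : ∀ y, IsPMF (mY y))
    (hD0 : ∀ x y, 0 ≤ D0 x y) : ∀ k x y, 0 ≤ costIter mX mY D0 k x y := by
  intro k
  induction k with
  | zero => exact hD0
  | succ k ih =>
    intro x y
    rw [costIter_succ_eq]
    exact sInf_costSet_nonneg (hmX x) (hmY y) ih

lemma coupling_sum_smul_sub {E : Type*} [AddCommGroup E] [Module ℝ E]
    {p : X → ℝ} {q : Y → ℝ} {γ : X → Y → ℝ} (hγ : IsCoupling p q γ)
    (f : X → E) (g : Y → E) :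
    (∑ x, p x • f x) - (∑ y, q y • g y) = ∑ x, ∑ y, γ x y • (f x - g y) := by
  symm
  have h1 : ∑ x, ∑ y, γ x y • f x = ∑ x, p x • f x := by
    refine Finset.sum_congr rfl fun x _ => ?_
    rw [← Finset.sum_smul, hγ.2.1 x]
  have h2 : ∑ x, ∑ y, γ x y • g y = ∑ y, q y • g y := by
    rw [Finset.sum_comm]
    refine Finset.sum_congr rfl fun y _ => ?_
    rw [← Finset.sum_smul, hγ.2.2 y]
  calc ∑ x, ∑ y, γ x y • (f x - g y)
      = ∑ x, ((∑ y, γ x y • f x) - ∑ y, γ x y • g y) := by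
        refine Finset.sum_congr rfl fun x _ => ?_
        rw [← Finset.sum_sub_distrib]
        exact Finset.sum_congr rfl fun y _ => smul_sub _ _ _
    _ = (∑ x, ∑ y, γ x y • f x) - ∑ x, ∑ y, γ x y • g y := Finset.sum_sub_distrib _ _
    _ = (∑ x, p x • f x) - ∑ y, q y • g y := by rw [h1, h2]

lemma dist_smul_sum_le {E : Type*} [NormedAddCommGroup E] [NormedSpace ℝ E]
    {p : X → ℝ} {q : Y → ℝ} {γ : X → Y → ℝ} (hγ : IsCoupling p q γ)
    (f : X → E) (g : Y → E) (D : X → Y → ℝ) (K : ℝ)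
    (h : ∀ x y, dist (f x) (g y) ≤ K * D x y) :
    dist (∑ x, p x • f x) (∑ y, q y • g y) ≤ K * ∑ x, ∑ y, D x y * γ x y := by
  rw [dist_eq_norm, coupling_sum_smul_sub hγ f g]
  calc ‖∑ x, ∑ y, γ x y • (f x - g y)‖
      ≤ ∑ x, ‖∑ y, γ x y • (f x - g y)‖ := norm_sum_le _ _
    _ ≤ ∑ x, ∑ y, ‖γ x y • (f x - g y)‖ :=
        Finset.sum_le_sum fun x _ => norm_sum_le _ _
    _ ≤ ∑ x, ∑ y, γ x y * (K * D x y) := by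
        refine Finset.sum_le_sum fun x _ => Finset.sum_le_sum fun y _ => ?_
        rw [norm_smul, Real.norm_eq_abs, abs_of_nonneg (hγ.1 x y)]
        exact mul_le_mul_of_nonneg_left (by rw [← dist_eq_norm]; exact h x y) (hγ.1 x y)
    _ = K * ∑ x, ∑ y, D x y * γ x y := by
        rw [Finset.mul_sum]
        refine Finset.sum_congr rfl fun x _ => ?_
        rw [Finset.mul_sum]
        exact Finset.sum_congr rfl fun y _ => by ring

lemma exists_diag_coupling {Z : Type*} [DecidableEq Z] {p : X → ℝ} {q : Y → ℝ}
    (hp : IsPMF p) (hq : IsPMF q) (u : X → Z) (v : Y → Z)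
    (h : ∀ z : Z, ∑ x ∈ Finset.univ.filter (fun x => u x = z), p x
        = ∑ y ∈ Finset.univ.filter (fun y => v y = z), q y) :
    ∃ γ : X → Y → ℝ, IsCoupling p q γ ∧ ∀ x y, γ x y ≠ 0 → u x = v y := by
  set w : Z → ℝ := fun z => ∑ x ∈ Finset.univ.filter (fun x => u x = z), p x with hw
  have hwnn : ∀ z, 0 ≤ w z := fun z => Finset.sum_nonneg fun x _ => hp.1 x
  have hple : ∀ x, p x ≤ w (u x) := fun x =>
    Finset.single_le_sum (f := p) (fun i _ => hp.1 i)
      (Finset.mem_filter.2 ⟨Finset.mem_univ x, rfl⟩)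
  have hqle : ∀ y, q y ≤ w (v y) := by
    intro y
    rw [hw]
    dsimp only
    rw [h (v y)]
    exact Finset.single_le_sum (f := q) (fun i _ => hq.1 i)
      (Finset.mem_filter.2 ⟨Finset.mem_univ y, rfl⟩)
  refine ⟨fun x y => if u x = v y then p x * q y / w (u x) else 0, ⟨?_, ?_, ?_⟩, ?_⟩
  · intro x y
    dsimp only
    split
    · exact div_nonneg (mul_nonneg (hp.1 x) (hq.1 y)) (hwnn _)
    · exact le_refl 0
  · intro x
    have step1 : ∀ y, (if u x = v y then p x * q y / w (u x) else 0)
        = (p x / w (u x)) * (if u x = v y then q y else 0) := by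
      intro y
      by_cases hc : u x = v y <;> simp [hc, div_mul_eq_mul_div]
    calc ∑ y, (if u x = v y then p x * q y / w (u x) else 0)
        = ∑ y, (p x / w (u x)) * (if u x = v y then q y else 0) :=
          Finset.sum_congr rfl fun y _ => step1 y
      _ = (p x / w (u x)) * ∑ y, (if u x = v y then q y else 0) := by rw [Finset.mul_sum]
      _ = (p x / w (u x)) * w (u x) := by
          rw [← Finset.sum_filter]
          rw [show (Finset.univ.filter fun y => u x = v y)
              = Finset.univ.filter fun y => v y = u x from
            Finset.filter_congr fun y _ => by exact eq_comm]
          rw [← h (u x)]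
      _ = p x := by
          by_cases hw0 : w (u x) = 0
          · have : p x = 0 := le_antisymm (hw0 ▸ hple x) (hp.1 x)
            simp [hw0, this]
          · exact div_mul_cancel₀ (p x) hw0
  · intro y
    have step1 : ∀ x, (if u x = v y then p x * q y / w (u x) else 0)
        = (q y / w (v y)) * (if u x = v y then p x else 0) := by
      intro x
      by_cases hc : u x = v y
      · rw [if_pos hc, if_pos hc, hc]
        ring
      · simp [hc]
    calc ∑ x, (if u x = v y then p x * q y / w (u x) else 0)
        = ∑ x, (q y / w (v y)) * (if u x = v y then p x else 0) :=
          Finset.sum_congr rfl fun x _ => step1 x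
      _ = (q y / w (v y)) * ∑ x, (if u x = v y then p x else 0) := by rw [Finset.mul_sum]
      _ = (q y / w (v y)) * w (v y) := by rw [← Finset.sum_filter]
      _ = q y := by
          by_cases hw0 : w (v y) = 0
          · have : q y = 0 := le_antisymm (hw0 ▸ hqle y) (hq.1 y)
            simp [hw0, this]
          · exact div_mul_cancel₀ (q y) hw0
  · intro x y hne
    by_contra huv
    exact hne (if_neg huv)

end CouplingAux

lemma le_zero_of_forall_le_mul {a C : ℝ} (hC : 0 ≤ C) (h : ∀ ε : ℝ, 0 < ε → a ≤ C * ε) :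
    a ≤ 0 := by
  by_contra hlt
  push_neg at hlt
  have h1 := h (a / (C + 1)) (by positivity)
  have h3 : (0:ℝ) < C + 1 := by linarith
  rw [mul_div_assoc', le_div_iff₀ h3] at h1
  nlinarith

/-- Separation constant of a finite family of labels. -/
noncomputable def sep {P : Type*} [Fintype P] [Nonempty P] {a : ℕ}
    (c : P → EuclideanSpace ℝ (Fin a)) : ℝ :=
  Finset.univ.inf' Finset.univ_nonempty
    (fun pq : P × P => if c pq.1 = c pq.2 then 1 else dist (c pq.1) (c pq.2))

lemma sep_pos {P : Type*} [Fintype P] [Nonempty P] {a : ℕ}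
    (c : P → EuclideanSpace ℝ (Fin a)) : 0 < sep c := by
  rw [sep, Finset.lt_inf'_iff]
  intro pq _
  by_cases hc : c pq.1 = c pq.2
  · rw [if_pos hc]; exact one_pos
  · rw [if_neg hc]; exact dist_pos.2 hc

lemma sep_le {P : Type*} [Fintype P] [Nonempty P] {a : ℕ}
    (c : P → EuclideanSpace ℝ (Fin a)) {p q : P} (h : c p ≠ c q) :
    sep c ≤ dist (c p) (c q) := by
  rw [sep]
  refine le_trans (Finset.inf'_le _ (Finset.mem_univ ((p, q) : P × P))) ?_
  rw [if_neg h]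

/-- A Lipschitz bump-indicator embedding of a label family into Euclidean space. -/
noncomputable def buildPhi {P : Type*} [Fintype P] {a n : ℕ} (ρ : P ≃ Fin n)
    (c : P → EuclideanSpace ℝ (Fin a)) (δ : ℝ) :
    EuclideanSpace ℝ (Fin a) → EuclideanSpace ℝ (Fin n) :=
  fun z => WithLp.toLp 2 (fun i => max 0 (1 - dist z (c (ρ.symm i)) / δ))

lemma buildPhi_label {P : Type*} [Fintype P] [Nonempty P] {a n : ℕ} (ρ : P ≃ Fin n)
    (c : P → EuclideanSpace ℝ (Fin a)) (q : P) (i : Fin n) :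
    buildPhi ρ c (sep c) (c q) i = if c q = c (ρ.symm i) then 1 else 0 := by
  show max 0 (1 - dist (c q) (c (ρ.symm i)) / sep c) = _
  split
  · rename_i hc
    rw [hc, dist_self, zero_div, sub_zero]
    exact max_eq_right zero_le_one
  · rename_i hc
    have h1 : sep c ≤ dist (c q) (c (ρ.symm i)) := sep_le c hc
    have h2 : (1 : ℝ) ≤ dist (c q) (c (ρ.symm i)) / sep c :=
      (one_le_div (sep_pos c)).2 h1
    exact max_eq_left (by linarith)

lemma buildPhi_lipschitz {P : Type*} [Fintype P] {a n : ℕ} (ρ : P ≃ Fin n)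
    (c : P → EuclideanSpace ℝ (Fin a)) {δ : ℝ} (hδ : 0 < δ) :
    LipschitzWith (Real.toNNReal (Real.sqrt n / δ)) (buildPhi ρ c δ) := by
  apply LipschitzWith.of_dist_le_mul
  intro z w
  have coord : ∀ i : Fin n, dist (buildPhi ρ c δ z i) (buildPhi ρ c δ w i) ≤ dist z w / δ := by
    intro i
    rw [Real.dist_eq, buildPhi]
    calc |max 0 (1 - dist z (c (ρ.symm i)) / δ) - max 0 (1 - dist w (c (ρ.symm i)) / δ)|
        ≤ |(1 - dist z (c (ρ.symm i)) / δ) - (1 - dist w (c (ρ.symm i)) / δ)| := by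
          simpa [max_comm] using
            abs_max_sub_max_le_abs (1 - dist z (c (ρ.symm i)) / δ)
              (1 - dist w (c (ρ.symm i)) / δ) 0
      _ = |dist z (c (ρ.symm i)) - dist w (c (ρ.symm i))| / δ := by
          have hA : 1 - dist z (c (ρ.symm i)) / δ - (1 - dist w (c (ρ.symm i)) / δ)
              = (dist w (c (ρ.symm i)) - dist z (c (ρ.symm i))) / δ := by ring
          rw [hA, abs_div, abs_of_pos hδ, abs_sub_comm]
      _ ≤ dist z w / δ := (div_le_div_iff_of_pos_right hδ).2 (abs_dist_sub_le _ _ _)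
  rw [Real.coe_toNNReal _ (by positivity)]
  rw [EuclideanSpace.dist_eq]
  calc Real.sqrt (∑ i, dist (buildPhi ρ c δ z i) (buildPhi ρ c δ w i) ^ 2)
      ≤ Real.sqrt (∑ _i : Fin n, (dist z w / δ) ^ 2) :=
        Real.sqrt_le_sqrt (Finset.sum_le_sum fun i _ =>
          pow_le_pow_left₀ dist_nonneg (coord i) 2)
    _ = Real.sqrt ((n : ℝ) * (dist z w / δ) ^ 2) := by
        rw [Finset.sum_const, Finset.card_univ, Fintype.card_fin, nsmul_eq_mul]
    _ = Real.sqrt n * (dist z w / δ) := by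
        rw [Real.sqrt_mul (Nat.cast_nonneg n), Real.sqrt_sq (by positivity)]
    _ = Real.sqrt n / δ * dist z w := by ring

section Construction

variable [Fintype X] [Fintype Y]

lemma sum_smul_buildPhi_apply {P : Type*} [Fintype P] {a n : ℕ} (ρ : P ≃ Fin n)
    (c : P → EuclideanSpace ℝ (Fin a)) (δ : ℝ) {ι : Type*} [Fintype ι]
    (p : ι → ℝ) (f : ι → P) (i : Fin n) :
    (∑ t, p t • buildPhi ρ c δ (c (f t))) i = ∑ t, p t * buildPhi ρ c δ (c (f t)) i := by
  rw [WithLp.ofLp_sum, Finset.sum_apply]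
  exact Finset.sum_congr rfl fun t _ => rfl

/-- The label hierarchy used in the distinguishing MCNN. -/
noncomputable def seqc [Nonempty (X ⊕ Y)] {d : ℕ} (mX : X → X → ℝ) (mY : Y → Y → ℝ)
    (ℓX : X → EuclideanSpace ℝ (Fin d)) (ℓY : Y → EuclideanSpace ℝ (Fin d)) :
    (j : ℕ) → (X ⊕ Y) → EuclideanSpace ℝ (Fin (mcnnDim d (fun _ => Fintype.card (X ⊕ Y)) j))
  | 0 => Sum.elim ℓX ℓY
  | j + 1 => fun s =>
      Sum.elim
        (fun x => ∑ x', mX x x' •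
          buildPhi (Fintype.equivFin (X ⊕ Y)) (seqc mX mY ℓX ℓY j) (sep (seqc mX mY ℓX ℓY j))
            (seqc mX mY ℓX ℓY j (Sum.inl x')))
        (fun y => ∑ y', mY y y' •
          buildPhi (Fintype.equivFin (X ⊕ Y)) (seqc mX mY ℓX ℓY j) (sep (seqc mX mY ℓX ℓY j))
            (seqc mX mY ℓX ℓY j (Sum.inr y'))) s

variable [Nonempty (X ⊕ Y)] {d : ℕ} (mX : X → X → ℝ) (mY : Y → Y → ℝ)
  (ℓX : X → EuclideanSpace ℝ (Fin d)) (ℓY : Y → EuclideanSpace ℝ (Fin d))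
  (μY : Y → ℝ) (k : ℕ)

/-- The distinguishing MCNN. -/
noncomputable def mcnnOf : MCNN d k where
  dims := fun _ => Fintype.card (X ⊕ Y)
  φ := fun i => buildPhi (Fintype.equivFin (X ⊕ Y)) (seqc mX mY ℓX ℓY i)
    (sep (seqc mX mY ℓX ℓY i))
  φ_lip := fun i => ⟨_, buildPhi_lipschitz _ _ (sep_pos _)⟩
  ψ := fun z => dist z (∑ y, μY y •
    buildPhi (Fintype.equivFin (X ⊕ Y)) (seqc mX mY ℓX ℓY k) (sep (seqc mX mY ℓX ℓY k))
      (seqc mX mY ℓX ℓY k (Sum.inr y)))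
  ψ_cont := Continuous.dist continuous_id continuous_const

lemma mcnnOf_label_inl : ∀ j x,
    mcnnLabel (mcnnOf mX mY ℓX ℓY μY k) mX ℓX j x = seqc mX mY ℓX ℓY j (Sum.inl x) := by
  intro j
  induction j with
  | zero => intro x; rfl
  | succ j ih =>
    intro x
    show (∑ x', mX x x' • (mcnnOf mX mY ℓX ℓY μY k).φ j
        (mcnnLabel (mcnnOf mX mY ℓX ℓY μY k) mX ℓX j x')) = _
    rw [show (seqc mX mY ℓX ℓY (j + 1) (Sum.inl x) :
        EuclideanSpace ℝ (Fin (Fintype.card (X ⊕ Y)))) = ∑ x', mX x x' •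
          buildPhi (Fintype.equivFin (X ⊕ Y)) (seqc mX mY ℓX ℓY j) (sep (seqc mX mY ℓX ℓY j))
            (seqc mX mY ℓX ℓY j (Sum.inl x')) from rfl]
    exact Finset.sum_congr rfl fun x' _ => by rw [ih x']; rfl

lemma mcnnOf_label_inr : ∀ j y,
    mcnnLabel (mcnnOf mX mY ℓX ℓY μY k) mY ℓY j y = seqc mX mY ℓX ℓY j (Sum.inr y) := by
  intro j
  induction j with
  | zero => intro y; rfl
  | succ j ih =>
    intro y
    show (∑ y', mY y y' • (mcnnOf mX mY ℓX ℓY μY k).φ j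
        (mcnnLabel (mcnnOf mX mY ℓX ℓY μY k) mY ℓY j y')) = _
    rw [show (seqc mX mY ℓX ℓY (j + 1) (Sum.inr y) :
        EuclideanSpace ℝ (Fin (Fintype.card (X ⊕ Y)))) = ∑ y', mY y y' •
          buildPhi (Fintype.equivFin (X ⊕ Y)) (seqc mX mY ℓX ℓY j) (sep (seqc mX mY ℓX ℓY j))
            (seqc mX mY ℓX ℓY j (Sum.inr y')) from rfl]
    exact Finset.sum_congr rfl fun y' _ => by rw [ih y']; rfl

/-- Pushforward equality from coordinatewise equality of indicator barycenters. -/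
lemma pushforward_eq {a n : ℕ} (ρ : (X ⊕ Y) ≃ Fin n)
    (c : (X ⊕ Y) → EuclideanSpace ℝ (Fin a)) {p : X → ℝ} {q : Y → ℝ}
    (h : ∀ i : Fin n,
      (∑ x', p x' * (if c (Sum.inl x') = c (ρ.symm i) then 1 else 0))
        = ∑ y', q y' * (if c (Sum.inr y') = c (ρ.symm i) then 1 else 0)) :
    ∀ z, ∑ x' ∈ Finset.univ.filter (fun x' => c (Sum.inl x') = z), p x'
        = ∑ y' ∈ Finset.univ.filter (fun y' => c (Sum.inr y') = z), q y' := by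
  intro z
  by_cases hz : ∃ s : X ⊕ Y, c s = z
  · obtain ⟨s, rfl⟩ := hz
    have h' := h (ρ s)
    rw [Equiv.symm_apply_apply] at h'
    rw [Finset.sum_filter, Finset.sum_filter]
    simpa only [mul_ite, mul_one, mul_zero] using h'
  · push_neg at hz
    rw [Finset.filter_false_of_mem fun x' _ => hz (Sum.inl x'),
      Finset.filter_false_of_mem fun y' _ => hz (Sum.inr y'),
      Finset.sum_empty, Finset.sum_empty]

/-- Key invariant: equal constructed labels force vanishing WL cost. -/
lemma seqc_cost_zero (hmX : ∀ x, IsPMF (mX x)) (hmY : ∀ y, IsPMF (mY y)) :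
    ∀ j (x : X) (y : Y), seqc mX mY ℓX ℓY j (Sum.inl x) = seqc mX mY ℓX ℓY j (Sum.inr y) →
      costIter mX mY (fun x y => dist (ℓX x) (ℓY y)) j x y = 0 := by
  intro j
  induction j with
  | zero =>
    intro x y h
    exact dist_eq_zero.2 (h : ℓX x = ℓY y)
  | succ j ih =>
    intro x y h
    set ρ := Fintype.equivFin (X ⊕ Y) with hρ
    set c := seqc mX mY ℓX ℓY j with hc
    have h' : (∑ x', mX x x' • buildPhi ρ c (sep c) (c (Sum.inl x')))
        = ∑ y', mY y y' • buildPhi ρ c (sep c) (c (Sum.inr y')) := h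
    have hcoord : ∀ i : Fin (Fintype.card (X ⊕ Y)),
        (∑ x', mX x x' * (if c (Sum.inl x') = c (ρ.symm i) then 1 else 0))
          = ∑ y', mY y y' * (if c (Sum.inr y') = c (ρ.symm i) then 1 else 0) := by
      intro i
      have := congrFun (congrArg WithLp.ofLp h') i
      rw [sum_smul_buildPhi_apply, sum_smul_buildPhi_apply] at this
      calc (∑ x', mX x x' * (if c (Sum.inl x') = c (ρ.symm i) then 1 else 0))
          = ∑ x', mX x x' * buildPhi ρ c (sep c) (c (Sum.inl x')) i :=
            Finset.sum_congr rfl fun x' _ => by rw [buildPhi_label]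
        _ = ∑ y', mY y y' * buildPhi ρ c (sep c) (c (Sum.inr y')) i := this
        _ = _ := Finset.sum_congr rfl fun y' _ => by rw [buildPhi_label]
    have hpush := pushforward_eq ρ c hcoord
    obtain ⟨γ, hγ, hsupp⟩ :=
      exists_diag_coupling (hmX x) (hmY y) (fun x' => c (Sum.inl x'))
        (fun y' => c (Sum.inr y')) hpush
    have hsum : ∑ x', ∑ y', costIter mX mY (fun x y => dist (ℓX x) (ℓY y)) j x' y' * γ x' y'
        = 0 := by
      refine Finset.sum_eq_zero fun x' _ => Finset.sum_eq_zero fun y' _ => ?_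
      by_cases hg : γ x' y' = 0
      · rw [hg, mul_zero]
      · rw [ih x' y' (hsupp x' y' hg), zero_mul]
    refine le_antisymm ?_ (costIter_nonneg hmX hmY (fun _ _ => dist_nonneg) _ x y)
    rw [costIter_succ_eq]
    exact le_of_le_of_eq (sInf_costSet_le
      (costIter_nonneg hmX hmY (fun _ _ => dist_nonneg) j) hγ) hsum

end Construction

section MainProof

variable [Fintype X] [Fintype Y]

lemma mcnnLabel_dist_le {d k : ℕ} {mX : X → X → ℝ} {mY : Y → Y → ℝ}
    (hmX : ∀ x, IsPMF (mX x)) (hmY : ∀ y, IsPMF (mY y))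
    (ℓX : X → EuclideanSpace ℝ (Fin d)) (ℓY : Y → EuclideanSpace ℝ (Fin d))
    (N : MCNN d k) :
    ∀ j, ∃ K : ℝ, 0 ≤ K ∧ ∀ x y,
      dist (mcnnLabel N mX ℓX j x) (mcnnLabel N mY ℓY j y)
        ≤ K * costIter mX mY (fun x y => dist (ℓX x) (ℓY y)) j x y := by
  intro j
  induction j with
  | zero =>
    exact ⟨1, zero_le_one, fun x y => by rw [one_mul]; exact le_refl _⟩
  | succ j ih =>
    obtain ⟨K, hK0, hK⟩ := ih
    obtain ⟨Kφ, hφ⟩ := N.φ_lip j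
    refine ⟨(Kφ : ℝ) * K, mul_nonneg Kφ.coe_nonneg hK0, fun x y => ?_⟩
    have hC : (0:ℝ) ≤ (Kφ : ℝ) * K := mul_nonneg Kφ.coe_nonneg hK0
    have hkey : dist (mcnnLabel N mX ℓX (j + 1) x) (mcnnLabel N mY ℓY (j + 1) y)
        - (Kφ : ℝ) * K * costIter mX mY (fun x y => dist (ℓX x) (ℓY y)) (j + 1) x y ≤ 0 := by
      apply le_zero_of_forall_le_mul hC
      intro ε hε
      obtain ⟨γ, hγ, hlt⟩ := exists_coupling_lt (hmX x) (hmY y)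
        (costIter mX mY (fun x y => dist (ℓX x) (ℓY y)) j) hε
      have hd := dist_smul_sum_le hγ
        (fun x' => N.φ j (mcnnLabel N mX ℓX j x'))
        (fun y' => N.φ j (mcnnLabel N mY ℓY j y'))
        (costIter mX mY (fun x y => dist (ℓX x) (ℓY y)) j) ((Kφ : ℝ) * K)
        (fun x' y' => by
          calc dist (N.φ j (mcnnLabel N mX ℓX j x')) (N.φ j (mcnnLabel N mY ℓY j y'))
              ≤ (Kφ : ℝ) * dist (mcnnLabel N mX ℓX j x') (mcnnLabel N mY ℓY j y') :=
                hφ.dist_le_mul _ _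
            _ ≤ (Kφ : ℝ) * (K * costIter mX mY (fun x y => dist (ℓX x) (ℓY y)) j x' y') :=
                mul_le_mul_of_nonneg_left (hK x' y') Kφ.coe_nonneg
            _ = (Kφ : ℝ) * K * costIter mX mY (fun x y => dist (ℓX x) (ℓY y)) j x' y' := by
                ring)
      have hlt' : ∑ x', ∑ y',
          costIter mX mY (fun x y => dist (ℓX x) (ℓY y)) j x' y' * γ x' y'
          ≤ costIter mX mY (fun x y => dist (ℓX x) (ℓY y)) (j + 1) x y + ε := by
        rw [costIter_succ_eq]
        exact hlt.le
      have hd' : dist (mcnnLabel N mX ℓX (j + 1) x) (mcnnLabel N mY ℓY (j + 1) y)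
          ≤ (Kφ : ℝ) * K * ∑ x', ∑ y',
            costIter mX mY (fun x y => dist (ℓX x) (ℓY y)) j x' y' * γ x' y' := hd
      nlinarith [mul_le_mul_of_nonneg_left hlt' hC]
    linarith

end MainProof

theorem mcnn_discriminative {X Y : Type*} [Fintype X] [Fintype Y] {d : ℕ}
    (mX : X → X → ℝ) (μX : X → ℝ) (ℓX : X → EuclideanSpace ℝ (Fin d))
    (mY : Y → Y → ℝ) (μY : Y → ℝ) (ℓY : Y → EuclideanSpace ℝ (Fin d))
    (hX : IsMMC mX μX) (hY : IsMMC mY μY) (k : ℕ) :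
    (dWL mX μX ℓX mY μY ℓY k = 0 →
      ∀ N : MCNN d k, mcnnEval N mX μX ℓX = mcnnEval N mY μY ℓY) ∧
    (0 < dWL mX μX ℓX mY μY ℓY k →
      ∃ N : MCNN d k, mcnnEval N mX μX ℓX ≠ mcnnEval N mY μY ℓY) := by
  have hdWL : dWL mX μX ℓX mY μY ℓY k
      = sInf (costSet μX μY (costIter mX mY (fun x y => dist (ℓX x) (ℓY y)) k)) := rfl
  have hDnn := costIter_nonneg hX.1 hY.1
    (fun (x : X) (y : Y) => dist_nonneg (x := ℓX x) (y := ℓY y))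
  constructor
  · -- Part 1
    intro h0 N
    obtain ⟨K, hK0, hK⟩ := mcnnLabel_dist_le hX.1 hY.1 ℓX ℓY N k
    obtain ⟨Kφ, hφ⟩ := N.φ_lip k
    have hC : (0:ℝ) ≤ (Kφ : ℝ) * K := mul_nonneg Kφ.coe_nonneg hK0
    have key : dist (∑ x, μX x • N.φ k (mcnnLabel N mX ℓX k x))
        (∑ y, μY y • N.φ k (mcnnLabel N mY ℓY k y)) ≤ 0 := by
      apply le_zero_of_forall_le_mul hC
      intro ε hε
      obtain ⟨γ, hγ, hlt⟩ := exists_coupling_lt hX.2.1 hY.2.1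
        (costIter mX mY (fun x y => dist (ℓX x) (ℓY y)) k) hε
      have hd := dist_smul_sum_le hγ
        (fun x => N.φ k (mcnnLabel N mX ℓX k x))
        (fun y => N.φ k (mcnnLabel N mY ℓY k y))
        (costIter mX mY (fun x y => dist (ℓX x) (ℓY y)) k) ((Kφ : ℝ) * K)
        (fun x y => by
          calc dist (N.φ k (mcnnLabel N mX ℓX k x)) (N.φ k (mcnnLabel N mY ℓY k y))
              ≤ (Kφ : ℝ) * dist (mcnnLabel N mX ℓX k x) (mcnnLabel N mY ℓY k y) :=
                hφ.dist_le_mul _ _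
            _ ≤ (Kφ : ℝ) * (K * costIter mX mY (fun x y => dist (ℓX x) (ℓY y)) k x y) :=
                mul_le_mul_of_nonneg_left (hK x y) Kφ.coe_nonneg
            _ = (Kφ : ℝ) * K * costIter mX mY (fun x y => dist (ℓX x) (ℓY y)) k x y := by
                ring)
      have hlt' : ∑ x, ∑ y,
          costIter mX mY (fun x y => dist (ℓX x) (ℓY y)) k x y * γ x y ≤ ε := by
        rw [← hdWL, h0, zero_add] at hlt
        exact hlt.le
      exact hd.trans (mul_le_mul_of_nonneg_left hlt' hC)
    have heq : (∑ x, μX x • N.φ k (mcnnLabel N mX ℓX k x))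
        = ∑ y, μY y • N.φ k (mcnnLabel N mY ℓY k y) :=
      eq_of_dist_eq_zero (le_antisymm key dist_nonneg)
    rw [mcnnEval, mcnnEval, heq]
  · -- Part 2
    intro hpos
    have hXne : Nonempty X := by
      rcases isEmpty_or_nonempty X with hemp | hne
      · exact absurd hX.2.1.2 (by simp [Finset.univ_eq_empty])
      · exact hne
    haveI : Nonempty (X ⊕ Y) := ⟨Sum.inl (Classical.arbitrary X)⟩
    refine ⟨mcnnOf mX mY ℓX ℓY μY k, fun heval => ?_⟩
    have hevalY : mcnnEval (mcnnOf mX mY ℓX ℓY μY k) mY μY ℓY = 0 := by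
      rw [mcnnEval]
      have h1 : (∑ y, μY y • (mcnnOf mX mY ℓX ℓY μY k).φ k
          (mcnnLabel (mcnnOf mX mY ℓX ℓY μY k) mY ℓY k y))
          = ∑ y, μY y • buildPhi (Fintype.equivFin (X ⊕ Y)) (seqc mX mY ℓX ℓY k)
              (sep (seqc mX mY ℓX ℓY k)) (seqc mX mY ℓX ℓY k (Sum.inr y)) :=
        Finset.sum_congr rfl fun y _ => by rw [mcnnOf_label_inr mX mY ℓX ℓY μY k k y]; rfl
      show dist _ _ = 0
      rw [h1]
      exact dist_self _
    have hevalX : mcnnEval (mcnnOf mX mY ℓX ℓY μY k) mX μX ℓX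
        = dist (∑ x, μX x • buildPhi (Fintype.equivFin (X ⊕ Y)) (seqc mX mY ℓX ℓY k)
            (sep (seqc mX mY ℓX ℓY k)) (seqc mX mY ℓX ℓY k (Sum.inl x)))
          (∑ y, μY y • buildPhi (Fintype.equivFin (X ⊕ Y)) (seqc mX mY ℓX ℓY k)
            (sep (seqc mX mY ℓX ℓY k)) (seqc mX mY ℓX ℓY k (Sum.inr y))) := by
      rw [mcnnEval]
      have h1 : (∑ x, μX x • (mcnnOf mX mY ℓX ℓY μY k).φ k
          (mcnnLabel (mcnnOf mX mY ℓX ℓY μY k) mX ℓX k x))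
          = ∑ x, μX x • buildPhi (Fintype.equivFin (X ⊕ Y)) (seqc mX mY ℓX ℓY k)
              (sep (seqc mX mY ℓX ℓY k)) (seqc mX mY ℓX ℓY k (Sum.inl x)) :=
        Finset.sum_congr rfl fun x _ => by rw [mcnnOf_label_inl mX mY ℓX ℓY μY k k x]; rfl
      show dist _ _ = _
      rw [h1]; rfl
    have hST : (∑ x, μX x • buildPhi (Fintype.equivFin (X ⊕ Y)) (seqc mX mY ℓX ℓY k)
          (sep (seqc mX mY ℓX ℓY k)) (seqc mX mY ℓX ℓY k (Sum.inl x)))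
        = ∑ y, μY y • buildPhi (Fintype.equivFin (X ⊕ Y)) (seqc mX mY ℓX ℓY k)
            (sep (seqc mX mY ℓX ℓY k)) (seqc mX mY ℓX ℓY k (Sum.inr y)) := by
      apply eq_of_dist_eq_zero
      rw [← hevalX, heval, hevalY]
    have hcoord : ∀ i : Fin (Fintype.card (X ⊕ Y)),
        (∑ x, μX x * (if seqc mX mY ℓX ℓY k (Sum.inl x)
            = seqc mX mY ℓX ℓY k ((Fintype.equivFin (X ⊕ Y)).symm i) then 1 else 0))
          = ∑ y, μY y * (if seqc mX mY ℓX ℓY k (Sum.inr y)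
            = seqc mX mY ℓX ℓY k ((Fintype.equivFin (X ⊕ Y)).symm i) then 1 else 0) := by
      intro i
      have h2 := congrFun (congrArg WithLp.ofLp hST) i
      rw [sum_smul_buildPhi_apply, sum_smul_buildPhi_apply] at h2
      calc (∑ x, μX x * (if seqc mX mY ℓX ℓY k (Sum.inl x)
            = seqc mX mY ℓX ℓY k ((Fintype.equivFin (X ⊕ Y)).symm i) then 1 else 0))
          = ∑ x, μX x * buildPhi (Fintype.equivFin (X ⊕ Y)) (seqc mX mY ℓX ℓY k)
              (sep (seqc mX mY ℓX ℓY k)) (seqc mX mY ℓX ℓY k (Sum.inl x)) i :=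
            Finset.sum_congr rfl fun x _ => by rw [buildPhi_label]
        _ = ∑ y, μY y * buildPhi (Fintype.equivFin (X ⊕ Y)) (seqc mX mY ℓX ℓY k)
              (sep (seqc mX mY ℓX ℓY k)) (seqc mX mY ℓX ℓY k (Sum.inr y)) i := h2
        _ = _ := Finset.sum_congr rfl fun y _ => by rw [buildPhi_label]
    have hpush := pushforward_eq (Fintype.equivFin (X ⊕ Y)) (seqc mX mY ℓX ℓY k) hcoord
    obtain ⟨γ, hγ, hsupp⟩ := exists_diag_coupling hX.2.1 hY.2.1
      (fun x => seqc mX mY ℓX ℓY k (Sum.inl x)) (fun y => seqc mX mY ℓX ℓY k (Sum.inr y)) hpush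
    have hsum : ∑ x, ∑ y, costIter mX mY (fun x y => dist (ℓX x) (ℓY y)) k x y * γ x y = 0 := by
      refine Finset.sum_eq_zero fun x _ => Finset.sum_eq_zero fun y _ => ?_
      by_cases hg : γ x y = 0
      · rw [hg, mul_zero]
      · rw [seqc_cost_zero mX mY ℓX ℓY hX.1 hY.1 k x y (hsupp x y hg), zero_mul]
    have hle : dWL mX μX ℓX mY μY ℓY k ≤ 0 := by
      rw [hdWL]
      exact le_of_le_of_eq (sInf_costSet_le (hDnn k) hγ) hsum
    linarith

end WLGW
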